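/- For real μ > -1, the integral of cos(2x)^μ / cos(x)^(2μ+2) over x from 0 to π/4 equals 2^(2μ) * B(μ+1, μ+1). -/

import Mathlib

open Real Set MeasureTheory intervalIntegral

-- Real Beta function formula
lemma beta_real {a b : ℝ} (ha : 0 < a) (hb : 0 < b) :
    ∫ x in (0:ℝ)..1, x ^ (a - 1) * (1 - x) ^ (b - 1) =
      Real.Gamma a * Real.Gamma b / Real.Gamma (a + b) := by
  have key := Complex.Gamma_mul_Gamma_eq_betaIntegral (s := a) (t := b)
    (by simpa using ha) (by simpa using hb)
  have hBeta : Complex.betaIntegral a b =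
      ((∫ x in (0:ℝ)..1, x ^ (a - 1) * (1 - x) ^ (b - 1) : ℝ) : ℂ) := by
    rw [Complex.betaIntegral, ← intervalIntegral.integral_ofReal]
    apply intervalIntegral.integral_congr
    intro x hx
    rw [uIcc_of_le (by norm_num : (0:ℝ) ≤ 1)] at hx
    simp only []
    rw [Complex.ofReal_mul, Complex.ofReal_cpow hx.1,
      Complex.ofReal_cpow (by linarith [hx.2] : (0:ℝ) ≤ 1 - x)]
    push_cast
    ring
  rw [hBeta, ← Complex.ofReal_add, Complex.Gamma_ofReal, Complex.Gamma_ofReal,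
    Complex.Gamma_ofReal, ← Complex.ofReal_mul, ← Complex.ofReal_mul] at key
  have := Complex.ofReal_inj.mp key
  have hG : Real.Gamma (a + b) ≠ 0 := (Real.Gamma_pos_of_pos (by linarith)).ne'
  field_simp
  linarith [this]

theorem stmt15 (μ : ℝ) (hμ : -1 < μ) :
    ∫ x in (0:ℝ)..(π/4), (Real.cos (2 * x)) ^ μ * (Real.cos x) ^ (-(2 * μ + 2)) =
      2 ^ (2 * μ) * (Real.Gamma (μ+1) * Real.Gamma (μ+1) / Real.Gamma ((μ+1) + (μ+1))) := by
  have hπ : (0:ℝ) < π := Real.pi_pos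
  -- Step 1: substitution t = tan x
  have himg1 : Real.tan '' Ioo 0 (π/4) = Ioo 0 1 := by
    ext t
    constructor
    · rintro ⟨x, ⟨hxa, hxb⟩, rfl⟩
      refine ⟨Real.tan_pos_of_pos_of_lt_pi_div_two hxa (by linarith), ?_⟩
      have := Real.tan_lt_tan_of_nonneg_of_lt_pi_div_two (le_of_lt hxa)
        (by linarith : π/4 < π/2) hxb
      rwa [Real.tan_pi_div_four] at this
    · rintro ⟨h0, h1⟩
      refine ⟨Real.arctan t, ⟨?_, ?_⟩, Real.tan_arctan t⟩
      · have := Real.arctan_strictMono h0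
        rwa [Real.arctan_zero] at this
      · calc Real.arctan t < Real.arctan 1 := Real.arctan_strictMono h1
          _ = π/4 := Real.arctan_one
  have step1 : ∫ t in Ioo (0:ℝ) 1, (1 - t^2) ^ μ =
      ∫ x in Ioo (0:ℝ) (π/4), Real.cos (2*x) ^ μ * Real.cos x ^ (-(2*μ+2)) := by
    rw [← himg1]
    rw [integral_image_eq_integral_abs_deriv_smul measurableSet_Ioo
      (f' := fun x => 1 / Real.cos x ^ 2) ?_ ?_]
    · apply setIntegral_congr_fun measurableSet_Ioo
      intro x hx
      have hx1 : (0:ℝ) < x := hx.1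
      have hx2 : x < π/4 := hx.2
      have hcos : 0 < Real.cos x := Real.cos_pos_of_mem_Ioo ⟨by linarith, by linarith⟩
      have htan : Real.tan x < 1 := by
        have := Real.tan_lt_tan_of_nonneg_of_lt_pi_div_two (le_of_lt hx1)
          (by linarith : π/4 < π/2) hx2
        rwa [Real.tan_pi_div_four] at this
      have htan0 : 0 < Real.tan x := Real.tan_pos_of_pos_of_lt_pi_div_two hx1 (by linarith)
      have hc2 : Real.cos (2*x) = Real.cos x ^ 2 * (1 - Real.tan x ^ 2) := by
        have hsc := Real.sin_sq_add_cos_sq x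
        rw [Real.cos_two_mul, Real.tan_eq_sin_div_cos]
        field_simp
        nlinarith [hsc]
      simp only [smul_eq_mul]
      rw [hc2]
      rw [Real.mul_rpow (by positivity) (by nlinarith)]
      have e1 : (Real.cos x ^ 2 : ℝ) ^ μ = Real.cos x ^ (2*μ) := by
        rw [← Real.rpow_natCast (Real.cos x) 2, ← Real.rpow_mul hcos.le]
        norm_num
      have e2 : Real.cos x ^ (2*μ) * Real.cos x ^ (-(2*μ+2)) = (Real.cos x ^ 2)⁻¹ := by
        rw [← Real.rpow_add hcos]
        rw [show 2*μ + -(2*μ+2) = -((2:ℕ):ℝ) by push_cast; ring,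
          Real.rpow_neg hcos.le, Real.rpow_natCast]
      rw [e1, abs_of_pos (by positivity : (0:ℝ) < 1 / Real.cos x ^ 2),
        show Real.cos x ^ (2*μ) * (1 - Real.tan x ^ 2) ^ μ * Real.cos x ^ (-(2*μ+2)) =
          (1 - Real.tan x ^ 2) ^ μ * (Real.cos x ^ (2*μ) * Real.cos x ^ (-(2*μ+2))) by ring,
        e2]
      ring
    · intro x hx
      have hcos : 0 < Real.cos x := Real.cos_pos_of_mem_Ioo
        ⟨by linarith [hx.1], by linarith [hx.2]⟩
      exact (Real.hasDerivAt_tan hcos.ne').hasDerivWithinAt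
    · refine Real.injOn_tan.mono (fun x hx => ?_)
      have hx' := Set.mem_Ioo.mp hx
      exact Set.mem_Ioo.mpr ⟨by linarith [hx'.1], by linarith [hx'.2]⟩
  -- Step 2: substitution u = t^2
  have himg2 : (fun t : ℝ => t^2) '' Ioo 0 1 = Ioo 0 1 := by
    ext u
    constructor
    · rintro ⟨t, ⟨ht0, ht1⟩, rfl⟩
      have : t^2 ∈ Ioo (0:ℝ) 1 := ⟨by positivity, by nlinarith⟩
      exact this
    · rintro ⟨h0, h1⟩
      refine ⟨Real.sqrt u, ⟨Real.sqrt_pos.mpr h0, ?_⟩, Real.sq_sqrt h0.le⟩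
      have := Real.sqrt_lt_sqrt h0.le h1
      rwa [Real.sqrt_one] at this
  have step2 : ∫ u in Ioo (0:ℝ) 1, (1/2 : ℝ) * (u ^ (-(1/2) : ℝ) * (1-u) ^ μ) =
      ∫ t in Ioo (0:ℝ) 1, (1 - t^2) ^ μ := by
    conv_lhs => rw [← himg2]
    rw [integral_image_eq_integral_abs_deriv_smul measurableSet_Ioo
      (f' := fun t => 2 * t) ?_ ?_]
    · apply setIntegral_congr_fun measurableSet_Ioo
      intro t ht
      have ht0 : (0:ℝ) < t := ht.1
      have ht1 : t < 1 := ht.2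
      simp only [smul_eq_mul]
      rw [abs_of_pos (by linarith : (0:ℝ) < 2*t)]
      have e1 : ((t^2 : ℝ)) ^ (-(1/2) : ℝ) = t⁻¹ := by
        rw [← Real.rpow_natCast t 2, ← Real.rpow_mul ht0.le]
        norm_num
        rw [Real.rpow_neg_one]
      rw [e1]
      field_simp
    · intro t ht
      simpa using (hasDerivAt_pow 2 t).hasDerivWithinAt
    · intro s hs t ht h
      have h' : s^2 = t^2 := h
      have : Real.sqrt (s^2) = Real.sqrt (t^2) := by rw [h']
      rwa [Real.sqrt_sq hs.1.le, Real.sqrt_sq ht.1.le] at this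
  -- put together
  have hIoc : ∫ x in (0:ℝ)..(π/4), Real.cos (2*x) ^ μ * Real.cos x ^ (-(2*μ+2)) =
      ∫ x in Ioo (0:ℝ) (π/4), Real.cos (2*x) ^ μ * Real.cos x ^ (-(2*μ+2)) := by
    rw [intervalIntegral.integral_of_le (by positivity), integral_Ioc_eq_integral_Ioo]
  have hbeta : ∫ u in (0:ℝ)..1, u ^ ((1/2 : ℝ) - 1) * (1-u) ^ ((μ+1) - 1) =
      Real.Gamma (1/2) * Real.Gamma (μ+1) / Real.Gamma (1/2 + (μ+1)) :=
    beta_real (by norm_num) (by linarith)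
  have hIoo : ∫ u in Ioo (0:ℝ) 1, (1/2 : ℝ) * (u ^ (-(1/2) : ℝ) * (1-u) ^ μ) =
      (1/2 : ℝ) * ∫ u in (0:ℝ)..1, u ^ ((1/2 : ℝ) - 1) * (1-u) ^ ((μ+1) - 1) := by
    rw [intervalIntegral.integral_of_le (by norm_num), integral_Ioc_eq_integral_Ioo,
      ← MeasureTheory.integral_const_mul]
    norm_num
  rw [hIoc, ← step1, ← step2, hIoo, hbeta]
  -- final Gamma computation
  have hdup := Real.Gamma_mul_Gamma_add_half (μ+1)
  have h12 : Real.Gamma (1/2) = Real.sqrt π := Real.Gamma_one_half_eq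
  have hGpos1 : 0 < Real.Gamma (μ+1) := Real.Gamma_pos_of_pos (by linarith)
  have hGpos2 : 0 < Real.Gamma (μ+1+1/2) := Real.Gamma_pos_of_pos (by linarith)
  have hGpos3 : 0 < Real.Gamma (2*(μ+1)) := Real.Gamma_pos_of_pos (by linarith)
  have hsq : (0:ℝ) < Real.sqrt π := Real.sqrt_pos.mpr hπ
  have heq : Real.Gamma ((μ+1)+(μ+1)) = Real.Gamma (2*(μ+1)) := by ring_nf
  have h2 : (2:ℝ) ^ (1 - 2*(μ+1)) * ((2:ℝ) ^ (2*μ) * 2) = 1 := by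
    rw [show ((2:ℝ)^(2*μ) * 2) = (2:ℝ)^(2*μ+1) by
      rw [Real.rpow_add two_pos, Real.rpow_one]]
    rw [← Real.rpow_add two_pos, show (1 - 2*(μ+1)) + (2*μ+1) = 0 by ring, Real.rpow_zero]
  rw [heq, h12, show (1/2 + (μ+1) : ℝ) = μ+1+1/2 by ring]
  rw [show (1/2 : ℝ) * (Real.sqrt π * Real.Gamma (μ+1) / Real.Gamma (μ+1+1/2)) =
        (Real.sqrt π * Real.Gamma (μ+1)) / (2 * Real.Gamma (μ+1+1/2)) by ring,
      show (2:ℝ)^(2*μ) * (Real.Gamma (μ+1) * Real.Gamma (μ+1) / Real.Gamma (2*(μ+1))) =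
        ((2:ℝ)^(2*μ) * (Real.Gamma (μ+1) * Real.Gamma (μ+1))) / Real.Gamma (2*(μ+1)) by ring,
      div_eq_div_iff ((by positivity : (0:ℝ) < 2 * Real.Gamma (μ+1+1/2)).ne') hGpos3.ne']
  linear_combination (-(2^(2*μ) * 2 * Real.Gamma (μ+1))) * hdup -
    (Real.sqrt π * Real.Gamma (μ+1) * Real.Gamma (2*(μ+1))) * h2
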